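/- Let p, q, ρ be nonnegative integers, and let Q be the poset of all subsets S ⊆ {1,...,p+q} with |{1,...,p} \ S| ≤ ρ and |S \ {1,...,p}| ≤ ρ, ordered by inclusion. Then Q is a LYM poset: for every antichain A ⊆ Q, ∑_{S∈A} 1/M_{r(S)} ≤ 1, where for S with i = |{1,...,p} \ S| and j = |S \ {1,...,p}| the rank is r(S) = min(p,ρ) − i + j, and M_m = ∑ C(p,i)·C(q,j), the sum over pairs (i,j) with 0 ≤ i ≤ min(p,ρ), 0 ≤ j ≤ min(q,ρ), and min(p,ρ) − i + j = m. -/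

import Mathlib

open Finset

/-- Membership in the smallest convex subposet of `(2^{[p+q]}, ⊆)` containing the
Hamming ball `B_ρ[p,q]`: subsets `S ⊆ {1,…,p+q}` with `|{1,…,p} \ S| ≤ ρ` and
`|S \ {1,…,p}| ≤ ρ`. -/
def memConvexHull (p q ρ : ℕ) (S : Finset ℕ) : Prop :=
  S ⊆ Finset.Icc 1 (p + q) ∧ (Finset.Icc 1 p \ S).card ≤ ρ ∧ (S \ Finset.Icc 1 p).card ≤ ρ

/-- The rank of `S`: with `i = |{1,…,p} \ S|` and `j = |S \ {1,…,p}|`, the rank is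
`min p ρ - i + j`. -/
def hammingRank (p ρ : ℕ) (S : Finset ℕ) : ℕ :=
  min p ρ - (Finset.Icc 1 p \ S).card + (S \ Finset.Icc 1 p).card

/-- The size of the `m`-th layer: `M_m = ∑ C(p,i) C(q,j)` over pairs `(i,j)` with
`0 ≤ i ≤ min p ρ`, `0 ≤ j ≤ min q ρ` and `min p ρ - i + j = m`. -/
def convexHullLayerSize (p q ρ m : ℕ) : ℕ :=
  ∑ ij ∈ (Finset.range (min p ρ + 1) ×ˢ Finset.range (min q ρ + 1)).filter
      (fun ij => min p ρ - ij.1 + ij.2 = m),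
    p.choose ij.1 * q.choose ij.2

namespace LYMHB

/-- block size at level `m`, column `j` (so row `i = min p ρ + j - m`). -/
def NB (p q ρ m j : ℕ) : ℕ :=
  if m ≤ min p ρ + j ∧ j ≤ m ∧ j ≤ min q ρ then
    p.choose (min p ρ + j - m) * q.choose j else 0

def ML (p q ρ m : ℕ) : ℕ := ∑ j ∈ range (min q ρ + 1), NB p q ρ m j

lemma ML_eq (p q ρ m : ℕ) : ML p q ρ m = convexHullLayerSize p q ρ m := by
  rw [convexHullLayerSize, Finset.sum_filter, Finset.sum_product, Finset.sum_comm]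
  apply Finset.sum_congr rfl
  intro j hj
  have hjb : j ≤ min q ρ := by simpa using Nat.lt_succ_iff.mp (mem_range.mp hj)
  by_cases hcond : m ≤ min p ρ + j ∧ j ≤ m
  · rw [show NB p q ρ m j = p.choose (min p ρ + j - m) * q.choose j by
      unfold NB; rw [if_pos ⟨hcond.1, hcond.2, hjb⟩]]
    rw [Finset.sum_eq_single_of_mem (min p ρ + j - m)
      (by simp only [mem_range]; omega)]
    · rw [if_pos (by omega)]
    · intro i hi hne
      rw [if_neg]
      have := Nat.lt_succ_iff.mp (mem_range.mp hi)
      omega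
  · rw [show NB p q ρ m j = 0 by unfold NB; rw [if_neg (by tauto)]]
    symm
    apply Finset.sum_eq_zero
    intro i hi
    have := Nat.lt_succ_iff.mp (mem_range.mp hi)
    rw [if_neg (by omega)]

lemma NB_eq_zero {p q ρ m j : ℕ} (h : m < j ∨ min q ρ < j ∨ min p ρ + j < m) : NB p q ρ m j = 0 := by
  unfold NB; rw [if_neg (by omega)]

lemma NB_pos {p q ρ m j : ℕ} (h1 : m ≤ min p ρ + j) (h2 : j ≤ m) (h3 : j ≤ min q ρ) :
    0 < NB p q ρ m j := by
  unfold NB; rw [if_pos ⟨h1, h2, h3⟩]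
  exact Nat.mul_pos (Nat.choose_pos (by omega)) (Nat.choose_pos (by omega))

lemma NB_val {p q ρ m j : ℕ} (h1 : m ≤ min p ρ + j) (h2 : j ≤ m) (h3 : j ≤ min q ρ) :
    NB p q ρ m j = p.choose (min p ρ + j - m) * q.choose j := by
  unfold NB; rw [if_pos ⟨h1, h2, h3⟩]

lemma sum_NB_eq (p q ρ m t : ℕ) (h : m + 1 ≤ t ∨ min q ρ + 1 ≤ t) :
    ∑ j ∈ range t, NB p q ρ m j = ML p q ρ m := by
  rcases le_total t (min q ρ + 1) with hle | hge
  · rw [ML, ← Finset.sum_subset (Finset.range_subset_range.mpr hle)]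
    intro j hj hnj
    have h1 := mem_range.mp hj
    have h2 : t ≤ j := by by_contra hc; exact hnj (mem_range.mpr (by omega))
    exact NB_eq_zero (by omega)
  · rw [ML, ← Finset.sum_subset (Finset.range_subset_range.mpr hge)]
    intro j hj hnj
    have h2 : min q ρ + 1 ≤ j := by by_contra hc; exact hnj (mem_range.mpr (by omega))
    exact NB_eq_zero (by omega)

lemma ML_pos {p q ρ m : ℕ} (h : m ≤ min p ρ + min q ρ) : 0 < ML p q ρ m := by
  apply Finset.sum_pos' (fun j _ => Nat.zero_le _)
  rcases le_total m (min p ρ) with hm | hm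
  · exact ⟨0, mem_range.mpr (by omega), NB_pos (by omega) (by omega) (by omega)⟩
  · exact ⟨m - min p ρ, mem_range.mpr (by omega), NB_pos (by omega) (by omega) (by omega)⟩

lemma choose_lc (n u v : ℕ) (huv : u ≤ v) :
    n.choose u * n.choose (v+1) ≤ n.choose (u+1) * n.choose v := by
  have h1 : (n.choose u * n.choose (v+1)) * ((u+1)*(v+1))
      ≤ (n.choose (u+1) * n.choose v) * ((u+1)*(v+1)) := by
    have e1 : n.choose (v+1) * (v+1) = n.choose v * (n - v) := Nat.choose_succ_right_eq n v
    have e2 : n.choose (u+1) * (u+1) = n.choose u * (n - u) := Nat.choose_succ_right_eq n u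
    calc (n.choose u * n.choose (v+1)) * ((u+1)*(v+1))
        = (n.choose u * n.choose v) * ((n - v) * (u+1)) := by
          rw [show (n.choose u * n.choose (v+1)) * ((u+1)*(v+1))
            = n.choose u * (n.choose (v+1) * (v+1)) * (u+1) by ring, e1]; ring
      _ ≤ (n.choose u * n.choose v) * ((n - u) * (v+1)) := by
          apply Nat.mul_le_mul_left
          exact Nat.mul_le_mul (Nat.sub_le_sub_left huv n) (by omega)
      _ = (n.choose (u+1) * n.choose v) * ((u+1)*(v+1)) := by
          rw [show (n.choose (u+1) * n.choose v) * ((u+1)*(v+1))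
            = n.choose (u+1) * (u+1) * n.choose v * (v+1) by ring, e2]; ring
  exact Nat.le_of_mul_le_mul_right h1 (by positivity)


lemma crossB (p q ρ m : ℕ) : ∀ j k, j ≤ k →
    NB p q ρ (m+1) j * NB p q ρ m k ≤ NB p q ρ m j * NB p q ρ (m+1) k := by
  intro j k hjk
  by_cases h1 : m + 1 ≤ min p ρ + j ∧ j ≤ m + 1 ∧ j ≤ min q ρ
  · by_cases h2 : m ≤ min p ρ + k ∧ k ≤ m ∧ k ≤ min q ρ
    · -- main case
      rw [NB_val h1.1 h1.2.1 h1.2.2, NB_val h2.1 h2.2.1 h2.2.2,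
        NB_val (by omega) (by omega) h1.2.2, NB_val (by omega) (by omega) h2.2.2]
      have key : p.choose (min p ρ + j - (m+1)) * p.choose (min p ρ + k - m)
          ≤ p.choose (min p ρ + j - m) * p.choose (min p ρ + k - (m+1)) := by
        have e1 : min p ρ + j - m = (min p ρ + j - (m+1)) + 1 := by omega
        have e2 : min p ρ + k - m = (min p ρ + k - (m+1)) + 1 := by omega
        rw [e1, e2]
        exact choose_lc p _ _ (by omega)
      calc p.choose (min p ρ + j - (m+1)) * q.choose j * (p.choose (min p ρ + k - m) * q.choose k)
          = (p.choose (min p ρ + j - (m+1)) * p.choose (min p ρ + k - m)) * (q.choose j * q.choose k) := by ring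
        _ ≤ (p.choose (min p ρ + j - m) * p.choose (min p ρ + k - (m+1))) * (q.choose j * q.choose k) :=
            Nat.mul_le_mul_right _ key
        _ = p.choose (min p ρ + j - m) * q.choose j * (p.choose (min p ρ + k - (m+1)) * q.choose k) := by ring
    · rw [NB_eq_zero (m := m) (j := k) (by omega), Nat.mul_zero]; exact Nat.zero_le _
  · rw [NB_eq_zero (m := m+1) (j := j) (by omega), Nat.zero_mul]; exact Nat.zero_le _

lemma crossA (p q ρ m : ℕ) : ∀ j k, j ≤ k →
    (if j = 0 then 0 else NB p q ρ m (j-1)) * NB p q ρ (m+1) k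
    ≤ NB p q ρ (m+1) j * (if k = 0 then 0 else NB p q ρ m (k-1)) := by
  intro j k hjk
  rcases Nat.eq_zero_or_pos j with hj0 | hj1
  · simp [hj0]
  rcases Nat.eq_zero_or_pos k with hk0 | hk1
  · omega
  rw [if_neg (by omega), if_neg (by omega)]
  by_cases h1 : m ≤ min p ρ + (j-1) ∧ j-1 ≤ m ∧ j-1 ≤ min q ρ
  · by_cases h2 : m + 1 ≤ min p ρ + k ∧ k ≤ m + 1 ∧ k ≤ min q ρ
    · rw [NB_val h1.1 h1.2.1 h1.2.2, NB_val h2.1 h2.2.1 h2.2.2,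
        NB_val (m := m+1) (j := j) (by omega) (by omega) (by omega),
        NB_val (m := m) (j := k-1) (by omega) (by omega) (by omega)]
      have ep1 : min p ρ + j - (m+1) = min p ρ + (j-1) - m := by omega
      have ep2 : min p ρ + (k-1) - m = min p ρ + k - (m+1) := by omega
      rw [ep1, ep2]
      have key : q.choose (j-1) * q.choose k ≤ q.choose j * q.choose (k-1) := by
        have e1 : j = (j-1) + 1 := by omega
        have e2 : k = (k-1) + 1 := by omega
        conv_lhs => rw [e2]
        conv_rhs => rw [e1]
        exact choose_lc q _ _ (by omega)
      calc p.choose (min p ρ + (j-1) - m) * q.choose (j-1) * (p.choose (min p ρ + k - (m+1)) * q.choose k)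
          = (q.choose (j-1) * q.choose k) * (p.choose (min p ρ + (j-1) - m) * p.choose (min p ρ + k - (m+1))) := by ring
        _ ≤ (q.choose j * q.choose (k-1)) * (p.choose (min p ρ + (j-1) - m) * p.choose (min p ρ + k - (m+1))) :=
            Nat.mul_le_mul_right _ key
        _ = p.choose (min p ρ + (j-1) - m) * q.choose j * (p.choose (min p ρ + k - (m+1)) * q.choose (k-1)) := by ring
    · rw [NB_eq_zero (m := m+1) (j := k) (by omega), Nat.mul_zero]; exact Nat.zero_le _
  · rw [NB_eq_zero (m := m) (j := j-1) (by omega), Nat.zero_mul]; exact Nat.zero_le _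

end LYMHB

namespace LYMHB2
open LYMHB

lemma cross_prefix (g h : ℕ → ℕ) (n t : ℕ) (ht : t ≤ n)
    (hc : ∀ j k, j ≤ k → h j * g k ≤ g j * h k) :
    (∑ j ∈ range t, h j) * (∑ k ∈ range n, g k) ≤
    (∑ j ∈ range t, g j) * (∑ k ∈ range n, h k) := by
  have hsplit : ∀ f : ℕ → ℕ, ∑ k ∈ range n, f k = ∑ k ∈ range t, f k + ∑ k ∈ Ico t n, f k := by
    intro f
    rw [range_eq_Ico, ← Finset.sum_Ico_consecutive _ (Nat.zero_le t) ht, range_eq_Ico]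
  rw [hsplit g, hsplit h, Nat.mul_add, Nat.mul_add]
  have key : (∑ j ∈ range t, h j) * (∑ k ∈ Ico t n, g k)
      ≤ (∑ j ∈ range t, g j) * (∑ k ∈ Ico t n, h k) := by
    rw [Finset.sum_mul_sum, Finset.sum_mul_sum]
    apply Finset.sum_le_sum; intro j hj
    apply Finset.sum_le_sum; intro k hk
    exact hc j k (le_trans (Nat.le_of_lt_succ (Nat.lt_succ_of_lt (mem_range.mp hj))) (mem_Ico.mp hk).1)
  have sq : (∑ j ∈ range t, h j) * (∑ k ∈ range t, g k)
      = (∑ j ∈ range t, g j) * (∑ k ∈ range t, h k) := by ring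
  omega


noncomputable def SP (p q ρ m t : ℕ) : ℝ :=
  (∑ j ∈ range t, (NB p q ρ m j : ℝ)) / (ML p q ρ m : ℝ)

noncomputable def AF (p q ρ m j : ℕ) : ℝ := SP p q ρ (m+1) (j+1) - SP p q ρ m j
noncomputable def BF (p q ρ m j : ℕ) : ℝ := SP p q ρ m (j+1) - SP p q ρ (m+1) (j+1)

lemma SP_cast (p q ρ m t : ℕ) :
    SP p q ρ m t = ((∑ j ∈ range t, NB p q ρ m j : ℕ) : ℝ) / (ML p q ρ m : ℝ) := by
  rw [SP, Nat.cast_sum]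

lemma SP_full {p q ρ m t : ℕ} (h : m + 1 ≤ t ∨ min q ρ + 1 ≤ t)
    (hm : m ≤ min p ρ + min q ρ) : SP p q ρ m t = 1 := by
  rw [SP_cast, sum_NB_eq p q ρ m t h, div_self]
  exact_mod_cast (ML_pos hm).ne'

lemma SP_succ_sub (p q ρ m j : ℕ) :
    SP p q ρ m (j+1) - SP p q ρ m j = (NB p q ρ m j : ℝ) / (ML p q ρ m : ℝ) := by
  rw [SP, SP, div_sub_div_same, Finset.sum_range_succ]
  ring_nf

lemma AF_nonneg {p q ρ m j : ℕ} (hm : m + 1 ≤ min p ρ + min q ρ) (hj : j ≤ min q ρ) :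
    0 ≤ AF p q ρ m j := by
  rw [AF, sub_nonneg, SP_cast, SP_cast]
  rw [div_le_div_iff₀ (by exact_mod_cast ML_pos (by omega)) (by exact_mod_cast ML_pos (by omega))]
  have key := cross_prefix (fun k => NB p q ρ (m+1) k)
      (fun k => if k = 0 then 0 else NB p q ρ m (k-1)) (min q ρ + 2) (j+1)
      (by omega) (crossA p q ρ m)
  have e1 : ∑ k ∈ range (j+1), (if k = 0 then 0 else NB p q ρ m (k-1))
      = ∑ k ∈ range j, NB p q ρ m k := by
    rw [Finset.sum_range_succ']; simp
  have e2 : ∑ k ∈ range (min q ρ + 2), NB p q ρ (m+1) k = ML p q ρ (m+1) := by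
    rw [sum_NB_eq]; omega
  have e3 : ∑ k ∈ range (min q ρ + 2), (if k = 0 then 0 else NB p q ρ m (k-1))
      = ML p q ρ m := by
    rw [Finset.sum_range_succ']; simp
    rw [sum_NB_eq]; omega
  rw [e1, e2, e3] at key
  exact_mod_cast key

lemma BF_nonneg {p q ρ m j : ℕ} (hm : m + 1 ≤ min p ρ + min q ρ) (hj : j ≤ min q ρ) :
    0 ≤ BF p q ρ m j := by
  rw [BF, sub_nonneg, SP_cast, SP_cast]
  rw [div_le_div_iff₀ (by exact_mod_cast ML_pos (by omega)) (by exact_mod_cast ML_pos (by omega))]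
  have key := cross_prefix (fun k => NB p q ρ m k) (fun k => NB p q ρ (m+1) k)
      (min q ρ + 1) (j+1) (by omega) (crossB p q ρ m)
  rw [show (∑ k ∈ range (min q ρ + 1), NB p q ρ m k) = ML p q ρ m from rfl,
    show (∑ k ∈ range (min q ρ + 1), NB p q ρ (m+1) k) = ML p q ρ (m+1) from rfl] at key
  exact_mod_cast key

end LYMHB2

namespace LYMHB3
open LYMHB LYMHB2

def icd (p : ℕ) (S : Finset ℕ) : ℕ := (Icc 1 p \ S).card
def jcd (p : ℕ) (S : Finset ℕ) : ℕ := (S \ Icc 1 p).card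

def Lev (p q ρ m : ℕ) : Finset (Finset ℕ) :=
  (Icc 1 (p+q)).powerset.filter (fun S => icd p S ≤ ρ ∧ jcd p S ≤ ρ ∧ hammingRank p ρ S = m)

lemma hammingRank_eq {p ρ : ℕ} {S : Finset ℕ} :
    hammingRank p ρ S = min p ρ - icd p S + jcd p S := rfl

lemma mem_Lev {p q ρ m : ℕ} {S : Finset ℕ} : S ∈ Lev p q ρ m ↔
    S ⊆ Icc 1 (p+q) ∧ icd p S ≤ ρ ∧ jcd p S ≤ ρ ∧ hammingRank p ρ S = m := by
  simp [Lev, Finset.mem_filter, Finset.mem_powerset, and_assoc]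

lemma icd_le_p (p : ℕ) (S : Finset ℕ) : icd p S ≤ p := by
  have h := Finset.card_le_card (Finset.sdiff_subset (s := Icc 1 p) (t := S))
  simpa [icd, Nat.card_Icc] using h

lemma jcd_le_q {p q : ℕ} {S : Finset ℕ} (hS : S ⊆ Icc 1 (p+q)) : jcd p S ≤ q := by
  have hsub : S \ Icc 1 p ⊆ Icc 1 (p+q) \ Icc 1 p := by
    intro a ha
    rw [Finset.mem_sdiff] at ha ⊢
    exact ⟨hS ha.1, ha.2⟩
  have h := Finset.card_le_card hsub
  have hcard : (Icc 1 (p+q) \ Icc 1 p).card = q := by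
    rw [Finset.card_sdiff_of_subset (Finset.Icc_subset_Icc_right (by omega))]
    simp [Nat.card_Icc]
  unfold jcd
  omega

lemma rank_arith {p q ρ m : ℕ} {S : Finset ℕ} (hS : S ∈ Lev p q ρ m) :
    min p ρ + jcd p S = m + icd p S ∧ icd p S ≤ min p ρ := by
  obtain ⟨h1, h2, h3, h4⟩ := mem_Lev.mp hS
  have h5 := icd_le_p p S
  unfold hammingRank at h4
  unfold icd jcd at *
  omega

lemma card_mem_Lev {p q ρ m : ℕ} {S : Finset ℕ} (hS : S ∈ Lev p q ρ m) :
    S.card + min p ρ = p + m + jcd p S - jcd p S ∧ S.card + min p ρ = p + m := by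
  obtain ⟨hr, hi⟩ := rank_arith hS
  have e1 : (S ∩ Icc 1 p).card + (S \ Icc 1 p).card = S.card :=
    Finset.card_inter_add_card_sdiff S (Icc 1 p)
  have e2 : (Icc 1 p ∩ S).card + (Icc 1 p \ S).card = p := by
    have := Finset.card_inter_add_card_sdiff (Icc 1 p) S
    simpa [Nat.card_Icc] using this
  rw [Finset.inter_comm] at e2
  unfold icd jcd at *
  constructor <;> omega

-- insert lemmas
lemma icd_insert_mem {p e : ℕ} {x : Finset ℕ} (he : e ∈ Icc 1 p) (hx : e ∉ x) :
    icd p (insert e x) + 1 = icd p x := by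
  unfold icd
  rw [Finset.sdiff_insert, Finset.card_erase_of_mem (Finset.mem_sdiff.mpr ⟨he, hx⟩)]
  have : 0 < (Icc 1 p \ x).card := Finset.card_pos.mpr ⟨e, Finset.mem_sdiff.mpr ⟨he, hx⟩⟩
  omega

lemma jcd_insert_mem {p e : ℕ} {x : Finset ℕ} (he : e ∈ Icc 1 p) :
    jcd p (insert e x) = jcd p x := by
  unfold jcd
  congr 1
  ext a
  simp only [Finset.mem_sdiff, Finset.mem_insert]
  constructor
  · rintro ⟨h1 | h1, h2⟩
    · exact absurd (h1 ▸ he) h2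
    · exact ⟨h1, h2⟩
  · rintro ⟨h1, h2⟩; exact ⟨Or.inr h1, h2⟩

lemma icd_insert_not {p e : ℕ} {x : Finset ℕ} (he : e ∉ Icc 1 p) :
    icd p (insert e x) = icd p x := by
  unfold icd
  rw [Finset.sdiff_insert, Finset.erase_eq_of_notMem (fun hc => he (Finset.mem_sdiff.mp hc).1)]

lemma jcd_insert_not {p e : ℕ} {x : Finset ℕ} (he : e ∉ Icc 1 p) (hx : e ∉ x) :
    jcd p (insert e x) = jcd p x + 1 := by
  unfold jcd
  rw [show insert e x \ Icc 1 p = insert e (x \ Icc 1 p) from Finset.insert_sdiff_of_notMem x he]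
  exact Finset.card_insert_of_notMem (fun hc => hx (Finset.mem_sdiff.mp hc).1)

-- erase lemmas
lemma icd_erase_mem {p e : ℕ} {y : Finset ℕ} (he : e ∈ Icc 1 p) (hy : e ∈ y) :
    icd p (y.erase e) = icd p y + 1 := by
  unfold icd
  rw [show Icc 1 p \ y.erase e = insert e (Icc 1 p \ y) by
    ext a
    simp only [Finset.mem_sdiff, Finset.mem_erase, Finset.mem_insert, not_and_or, not_not]
    constructor
    · rintro ⟨h1, h2 | h2⟩
      · exact Or.inl (by omega)
      · exact Or.inr ⟨h1, h2⟩
    · rintro (h1 | ⟨h1, h2⟩)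
      · subst h1; exact ⟨he, Or.inl rfl⟩
      · exact ⟨h1, Or.inr h2⟩]
  exact Finset.card_insert_of_notMem (fun hc => (Finset.mem_sdiff.mp hc).2 hy)

lemma jcd_erase_mem {p e : ℕ} {y : Finset ℕ} (he : e ∈ Icc 1 p) :
    jcd p (y.erase e) = jcd p y := by
  unfold jcd
  congr 1
  ext a
  simp only [Finset.mem_sdiff, Finset.mem_erase]
  constructor
  · rintro ⟨⟨h1, h2⟩, h3⟩; exact ⟨h2, h3⟩
  · rintro ⟨h1, h2⟩
    exact ⟨⟨fun hc => h2 (hc ▸ he), h1⟩, h2⟩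

lemma icd_erase_not {p e : ℕ} {y : Finset ℕ} (he : e ∉ Icc 1 p) :
    icd p (y.erase e) = icd p y := by
  unfold icd
  congr 1
  ext a
  simp only [Finset.mem_sdiff, Finset.mem_erase, not_and_or, not_not]
  constructor
  · rintro ⟨h1, h2 | h2⟩
    · exact absurd (h2 ▸ h1) he
    · exact ⟨h1, h2⟩
  · rintro ⟨h1, h2⟩; exact ⟨h1, Or.inr h2⟩

lemma jcd_erase_not {p e : ℕ} {y : Finset ℕ} (he : e ∉ Icc 1 p) (hy : e ∈ y) :
    jcd p (y.erase e) + 1 = jcd p y := by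
  unfold jcd
  rw [show y.erase e \ Icc 1 p = (y \ Icc 1 p).erase e from by
    ext a
    simp only [Finset.mem_sdiff, Finset.mem_erase]
    tauto]
  rw [Finset.card_erase_of_mem (Finset.mem_sdiff.mpr ⟨hy, he⟩)]
  have : 0 < (y \ Icc 1 p).card := Finset.card_pos.mpr ⟨e, Finset.mem_sdiff.mpr ⟨hy, he⟩⟩
  omega

lemma sdiff_insert_self {e : ℕ} {x : Finset ℕ} (hx : e ∉ x) : insert e x \ x = {e} := by
  ext a
  simp only [Finset.mem_sdiff, Finset.mem_insert, Finset.mem_singleton]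
  constructor
  · rintro ⟨h1 | h1, h2⟩
    · exact h1
    · exact absurd h1 h2
  · rintro rfl; exact ⟨Or.inl rfl, hx⟩

lemma sdiff_erase_self {e : ℕ} {y : Finset ℕ} (hy : e ∈ y) : y \ y.erase e = {e} := by
  ext a
  simp only [Finset.mem_sdiff, Finset.mem_erase, Finset.mem_singleton, not_and_or, not_not]
  constructor
  · rintro ⟨h1, h2 | h2⟩
    · omega
    · exact absurd h1 h2
  · rintro rfl; exact ⟨hy, Or.inl rfl⟩

end LYMHB3

namespace LYMHB4
open LYMHB LYMHB2 LYMHB3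

noncomputable def wA (p q ρ : ℕ) (x : Finset ℕ) : ℝ :=
  AF p q ρ (hammingRank p ρ x) (jcd p x) /
    ((icd p x : ℝ) * (NB p q ρ (hammingRank p ρ x) (jcd p x) : ℝ))

noncomputable def wB (p q ρ : ℕ) (x : Finset ℕ) : ℝ :=
  BF p q ρ (hammingRank p ρ x) (jcd p x) /
    (((q - jcd p x : ℕ) : ℝ) * (NB p q ρ (hammingRank p ρ x) (jcd p x) : ℝ))

noncomputable def W (p q ρ : ℕ) (x y : Finset ℕ) : ℝ :=
  if x ⊆ y ∧ (y \ x).card = 1 then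
    (if y \ x ⊆ Icc 1 p then wA p q ρ x else wB p q ρ x) else 0

lemma AF_zero_left {p q ρ m j : ℕ} (hm : m = min p ρ + j) : AF p q ρ m j = 0 := by
  rw [AF, SP, SP]
  rw [Finset.sum_eq_zero (fun k hk => by
    rw [NB_eq_zero (by right; right; have := mem_range.mp hk; omega)]; norm_num),
    Finset.sum_eq_zero (fun k hk => by
    rw [NB_eq_zero (by right; right; have := mem_range.mp hk; omega)]; norm_num)]
  simp

lemma jcd_le_minq {p q ρ m : ℕ} {S : Finset ℕ} (hS : S ∈ Lev p q ρ m) :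
    jcd p S ≤ min q ρ := by
  obtain ⟨h1, h2, h3, h4⟩ := mem_Lev.mp hS
  exact le_min (jcd_le_q h1) h3

lemma W_nonneg {p q ρ m : ℕ} {x : Finset ℕ} (hx : x ∈ Lev p q ρ m)
    (hm : m < min p ρ + min q ρ) (y : Finset ℕ) : 0 ≤ W p q ρ x y := by
  have hxr := (mem_Lev.mp hx).2.2.2
  have hjb := jcd_le_minq hx
  rw [W]
  split_ifs with h1 h2
  · rw [wA, hxr]
    apply div_nonneg (AF_nonneg (by omega) hjb)
    positivity
  · rw [wB, hxr]
    apply div_nonneg (BF_nonneg (by omega) hjb)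
    positivity
  · exact le_refl 0
end LYMHB4

namespace LYMHB4
open LYMHB LYMHB2 LYMHB3

theorem sum_W_out {p q ρ m : ℕ} {x : Finset ℕ} (hx : x ∈ Lev p q ρ m)
    (hm : m < min p ρ + min q ρ) :
    ∑ y ∈ Lev p q ρ (m+1), W p q ρ x y = 1 / (ML p q ρ m : ℝ) := by
  obtain ⟨hxs, hxi, hxj, hxr⟩ := mem_Lev.mp hx
  obtain ⟨hra, hia⟩ := rank_arith hx
  have hjb : jcd p x ≤ min q ρ := jcd_le_minq hx
  -- restrict to covers
  rw [← Finset.sum_filter_of_ne (p := fun y => x ⊆ y ∧ (y \ x).card = 1)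
    (fun y _ hW => by by_contra hc; exact hW (by rw [W, if_neg hc]))]
  -- bijection with added elements
  have hbij : ∑ y ∈ (Lev p q ρ (m+1)).filter (fun y => x ⊆ y ∧ (y \ x).card = 1),
      W p q ρ x y
      = ∑ e ∈ (Icc 1 (p+q) \ x).filter (fun e => insert e x ∈ Lev p q ρ (m+1)),
        W p q ρ x (insert e x) := by
    symm
    apply Finset.sum_bij (i := fun e _ => insert e x)
    · intro e he
      simp only [Finset.mem_filter, Finset.mem_sdiff] at he
      refine Finset.mem_filter.mpr ⟨he.2, Finset.subset_insert _ _, ?_⟩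
      rw [sdiff_insert_self he.1.2, Finset.card_singleton]
    · intro e1 he1 e2 he2 heq
      simp only [Finset.mem_filter, Finset.mem_sdiff] at he1 he2
      have : e1 ∈ insert e2 x := heq ▸ Finset.mem_insert_self e1 x
      rcases Finset.mem_insert.mp this with h | h
      · exact h
      · exact absurd h he1.1.2
    · intro y hy
      obtain ⟨hyL, hxy, hcard⟩ := Finset.mem_filter.mp hy
      obtain ⟨e, he⟩ := Finset.card_eq_one.mp hcard
      have hey : e ∈ y ∧ e ∉ x := by
        have : e ∈ y \ x := he ▸ Finset.mem_singleton_self e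
        exact ⟨(Finset.mem_sdiff.mp this).1, (Finset.mem_sdiff.mp this).2⟩
      have hins : insert e x = y := by
        apply Finset.Subset.antisymm
        · exact Finset.insert_subset hey.1 hxy
        · intro a ha
          by_cases hax : a ∈ x
          · exact Finset.mem_insert_of_mem hax
          · have : a ∈ y \ x := Finset.mem_sdiff.mpr ⟨ha, hax⟩
            rw [he, Finset.mem_singleton] at this
            exact this ▸ Finset.mem_insert_self e x
      refine ⟨e, ?_, hins⟩
      refine Finset.mem_filter.mpr ⟨Finset.mem_sdiff.mpr ⟨(mem_Lev.mp hyL).1 hey.1, hey.2⟩, ?_⟩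
      rw [hins]; exact hyL
    · intro e he; rfl
  rw [hbij]
  rw [← Finset.sum_filter_add_sum_filter_not _ (fun e => e ≤ p)]
  -- the alpha part
  have hEα : ((Icc 1 (p+q) \ x).filter (fun e => insert e x ∈ Lev p q ρ (m+1))).filter
      (fun e => e ≤ p) = Icc 1 p \ x := by
    ext e
    simp only [Finset.mem_filter, Finset.mem_sdiff, Finset.mem_Icc]
    constructor
    · intro h
      obtain ⟨⟨⟨⟨he1, he2⟩, hex⟩, hmem⟩, hep⟩ := h
      exact ⟨⟨he1, hep⟩, hex⟩
    · intro h
      obtain ⟨⟨he1, hep⟩, hex⟩ := h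
      have heIcc : e ∈ Icc 1 p := Finset.mem_Icc.mpr ⟨he1, hep⟩
      refine ⟨⟨⟨⟨he1, by omega⟩, hex⟩, ?_⟩, hep⟩
      have hicd := icd_insert_mem heIcc hex
      have hjcd := jcd_insert_mem (x := x) heIcc
      refine mem_Lev.mpr ⟨Finset.insert_subset (Finset.mem_Icc.mpr ⟨he1, by omega⟩) hxs,
        by omega, by omega, ?_⟩
      unfold hammingRank at hxr ⊢
      unfold icd at hicd hra hia
      unfold jcd at hjcd hra
      omega
  have hvalα : ∀ e ∈ Icc 1 p \ x, W p q ρ x (insert e x) = wA p q ρ x := by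
    intro e he
    obtain ⟨heI, hex⟩ := Finset.mem_sdiff.mp he
    rw [W, if_pos ⟨Finset.subset_insert _ _, by rw [sdiff_insert_self hex]; exact Finset.card_singleton e⟩,
      if_pos (by rw [sdiff_insert_self hex]; exact Finset.singleton_subset_iff.mpr heI)]
  rw [hEα, Finset.sum_congr rfl hvalα, Finset.sum_const]
  -- the beta part : case split
  have hMne : (ML p q ρ m : ℝ) ≠ 0 := by
    exact_mod_cast (ML_pos (le_of_lt (by omega))).ne'
  have hNBpos : 0 < NB p q ρ m (jcd p x) := NB_pos (by omega) (by omega) hjb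
  have hNBne : (NB p q ρ m (jcd p x) : ℝ) ≠ 0 := by exact_mod_cast hNBpos.ne'
  have claim1 : (icd p x : ℝ) * wA p q ρ x
      = AF p q ρ m (jcd p x) / (NB p q ρ m (jcd p x) : ℝ) := by
    rw [wA, hxr]
    by_cases hi : icd p x = 0
    · rw [hi, AF_zero_left (by omega)]
      norm_num
    · field_simp
  have hvalβ : ∀ e ∈ ((Icc 1 (p+q) \ x).filter
      (fun e => insert e x ∈ Lev p q ρ (m+1))).filter (fun e => ¬ e ≤ p),
      W p q ρ x (insert e x) = wB p q ρ x := by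
    intro e he
    simp only [Finset.mem_filter, Finset.mem_sdiff, Finset.mem_Icc] at he
    obtain ⟨⟨⟨⟨he1, he2⟩, hex⟩, hmem⟩, hep⟩ := he
    rw [W, if_pos ⟨Finset.subset_insert _ _, by
        rw [sdiff_insert_self hex]; exact Finset.card_singleton e⟩,
      if_neg (by
        rw [sdiff_insert_self hex, Finset.singleton_subset_iff, Finset.mem_Icc]
        omega)]
  rw [Finset.sum_congr rfl hvalβ, Finset.sum_const]
  have hsumβ : (((Icc 1 (p+q) \ x).filter (fun e => insert e x ∈ Lev p q ρ (m+1))).filter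
      (fun e => ¬ e ≤ p)).card • wB p q ρ x
      = BF p q ρ m (jcd p x) / (NB p q ρ m (jcd p x) : ℝ) := by
    rcases lt_or_eq_of_le hjb with hlt | heqj
    · have hEβ : ((Icc 1 (p+q) \ x).filter (fun e => insert e x ∈ Lev p q ρ (m+1))).filter
          (fun e => ¬ e ≤ p) = (Icc 1 (p+q) \ Icc 1 p) \ x := by
        ext e
        simp only [Finset.mem_filter, Finset.mem_sdiff, Finset.mem_Icc]
        constructor
        · intro h
          obtain ⟨⟨⟨⟨he1, he2⟩, hex⟩, hmem⟩, hep⟩ := h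
          exact ⟨⟨⟨he1, he2⟩, by omega⟩, hex⟩
        · intro h
          obtain ⟨⟨⟨he1, he2⟩, heni⟩, hex⟩ := h
          have hep : ¬ e ≤ p := by omega
          have heIcc : e ∉ Icc 1 p := by rw [Finset.mem_Icc]; omega
          have hicd := icd_insert_not (x := x) heIcc
          have hjcd := jcd_insert_not heIcc hex
          refine ⟨⟨⟨⟨he1, he2⟩, hex⟩, ?_⟩, hep⟩
          refine mem_Lev.mpr ⟨Finset.insert_subset (Finset.mem_Icc.mpr ⟨he1, he2⟩) hxs,
            by omega, by omega, ?_⟩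
          unfold hammingRank at hxr ⊢
          unfold icd at hicd hra hia
          unfold jcd at hjcd hra
          omega
      rw [hEβ]
      have hrw : (Icc 1 (p+q) \ Icc 1 p) \ x = (Icc 1 (p+q) \ Icc 1 p) \ (x \ Icc 1 p) := by
        ext a
        simp only [Finset.mem_sdiff]
        tauto
      have hsub : x \ Icc 1 p ⊆ Icc 1 (p+q) \ Icc 1 p := by
        intro a ha
        rw [Finset.mem_sdiff] at ha ⊢
        exact ⟨hxs ha.1, ha.2⟩
      have hq : (Icc 1 (p+q) \ Icc 1 p).card = q := by
        rw [Finset.card_sdiff_of_subset (Finset.Icc_subset_Icc_right (by omega))]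
        simp [Nat.card_Icc]
      have hcardβ : ((Icc 1 (p+q) \ Icc 1 p) \ x).card = q - jcd p x := by
        rw [hrw, Finset.card_sdiff_of_subset hsub, hq]; rfl
      rw [hcardβ, wB, hxr, nsmul_eq_mul]
      have hqj : (0:ℝ) < ((q - jcd p x : ℕ) : ℝ) := by
        have : jcd p x < q := lt_of_lt_of_le hlt (min_le_left q ρ)
        exact_mod_cast Nat.sub_pos_of_lt this
      field_simp
    · have hEβ : ((Icc 1 (p+q) \ x).filter (fun e => insert e x ∈ Lev p q ρ (m+1))).filter
          (fun e => ¬ e ≤ p) = ∅ := by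
        apply Finset.eq_empty_of_forall_notMem
        intro e he
        simp only [Finset.mem_filter, Finset.mem_sdiff, Finset.mem_Icc] at he
        obtain ⟨⟨⟨⟨he1, he2⟩, hex⟩, hmem⟩, hep⟩ := he
        have heIcc : e ∉ Icc 1 p := by rw [Finset.mem_Icc]; omega
        have hjcd := jcd_insert_not heIcc hex
        have h1 := jcd_le_minq hmem
        omega
      have hBF : BF p q ρ m (jcd p x) = 0 := by
        rw [BF, SP_full (by omega) (by omega), SP_full (by omega) (by omega)]
        ring
      rw [hEβ, hBF]
      simp
  rw [hsumβ, nsmul_eq_mul]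
  rw [show ((Icc 1 p \ x).card : ℝ) = (icd p x : ℝ) from rfl, claim1]
  rw [← add_div]
  have hAB : AF p q ρ m (jcd p x) + BF p q ρ m (jcd p x)
      = (NB p q ρ m (jcd p x) : ℝ) / (ML p q ρ m : ℝ) := by
    rw [AF, BF, ← SP_succ_sub]
    ring
  rw [hAB, div_right_comm, div_self hNBne]

end LYMHB4

namespace LYMHB4
open LYMHB LYMHB2 LYMHB3

theorem sum_W_in {p q ρ m : ℕ} {y : Finset ℕ} (hy : y ∈ Lev p q ρ (m+1)) :
    ∑ x ∈ Lev p q ρ m, W p q ρ x y = 1 / (ML p q ρ (m+1) : ℝ) := by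
  obtain ⟨hys, hyi, hyj, hyr⟩ := mem_Lev.mp hy
  obtain ⟨hra, hia⟩ := rank_arith hy
  have hjb : jcd p y ≤ min q ρ := jcd_le_minq hy
  have hm1 : m + 1 ≤ min p ρ + min q ρ := by omega
  have hMM : 0 < ML p q ρ m := ML_pos (by omega)
  have hMM' : 0 < ML p q ρ (m+1) := ML_pos (by omega)
  have hM'ne : (ML p q ρ (m+1) : ℝ) ≠ 0 := by exact_mod_cast hMM'.ne'
  have hNB' : 0 < NB p q ρ (m+1) (jcd p y) := NB_pos (by omega) (by omega) hjb
  have hNB'ne : (NB p q ρ (m+1) (jcd p y) : ℝ) ≠ 0 := by exact_mod_cast hNB'.ne'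
  -- restrict to covers
  rw [← Finset.sum_filter_of_ne (p := fun x => x ⊆ y ∧ (y \ x).card = 1)
    (fun x _ hW => by by_contra hc; exact hW (by rw [W, if_neg hc]))]
  -- bijection with erased elements
  have hbij : ∑ x ∈ (Lev p q ρ m).filter (fun x => x ⊆ y ∧ (y \ x).card = 1),
      W p q ρ x y
      = ∑ e ∈ y.filter (fun e => y.erase e ∈ Lev p q ρ m), W p q ρ (y.erase e) y := by
    symm
    apply Finset.sum_bij (i := fun e _ => y.erase e)
    · intro e he
      obtain ⟨hey, hmem⟩ := Finset.mem_filter.mp he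
      refine Finset.mem_filter.mpr ⟨hmem, Finset.erase_subset _ _, ?_⟩
      rw [Finset.sdiff_erase_self hey, Finset.card_singleton]
    · intro e1 he1 e2 he2 heq
      by_contra hne
      have h0 : e1 ∉ y.erase e1 := Finset.notMem_erase e1 y
      rw [heq] at h0
      exact h0 (Finset.mem_erase.mpr ⟨hne, (Finset.mem_filter.mp he1).1⟩)
    · intro x hx
      obtain ⟨hxL, hxy, hcard⟩ := Finset.mem_filter.mp hx
      obtain ⟨e, he⟩ := Finset.card_eq_one.mp hcard
      have hey : e ∈ y ∧ e ∉ x := by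
        have : e ∈ y \ x := he ▸ Finset.mem_singleton_self e
        exact ⟨(Finset.mem_sdiff.mp this).1, (Finset.mem_sdiff.mp this).2⟩
      have hers : y.erase e = x := by
        apply Finset.Subset.antisymm
        · intro a ha
          obtain ⟨hane, hay⟩ := Finset.mem_erase.mp ha
          by_contra hax
          have : a ∈ y \ x := Finset.mem_sdiff.mpr ⟨hay, hax⟩
          rw [he, Finset.mem_singleton] at this
          exact hane this
        · intro a ha
          exact Finset.mem_erase.mpr ⟨fun hc => hey.2 (hc ▸ ha), hxy ha⟩
      exact ⟨e, Finset.mem_filter.mpr ⟨hey.1, hers ▸ hxL⟩, hers⟩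
    · intro e he; rfl
  rw [hbij, ← Finset.sum_filter_add_sum_filter_not _ (fun e => e ≤ p)]
  -- alpha part
  have claimα : ∑ e ∈ (y.filter (fun e => y.erase e ∈ Lev p q ρ m)).filter (fun e => e ≤ p),
      W p q ρ (y.erase e) y
      = AF p q ρ m (jcd p y) / (NB p q ρ (m+1) (jcd p y) : ℝ) := by
    rcases lt_or_eq_of_le hia with hlt | heqi
    · -- E'α = y ∩ Icc 1 p, all erasures valid
      have hset : (y.filter (fun e => y.erase e ∈ Lev p q ρ m)).filter (fun e => e ≤ p)
          = y ∩ Icc 1 p := by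
        ext e
        simp only [Finset.mem_filter, Finset.mem_inter, Finset.mem_Icc]
        constructor
        · intro h
          obtain ⟨⟨hey, hmem⟩, hep⟩ := h
          have h1 : 1 ≤ e := (Finset.mem_Icc.mp (hys hey)).1
          exact ⟨hey, h1, hep⟩
        · intro h
          obtain ⟨hey, h1, hep⟩ := h
          have heIcc : e ∈ Icc 1 p := Finset.mem_Icc.mpr ⟨h1, hep⟩
          have hicd := icd_erase_mem heIcc hey
          have hjcd := jcd_erase_mem (y := y) heIcc
          refine ⟨⟨hey, ?_⟩, hep⟩
          refine mem_Lev.mpr ⟨(Finset.erase_subset _ _).trans hys, by omega, by omega, ?_⟩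
          rw [hammingRank_eq] at hyr ⊢
          omega
      have hval : ∀ e ∈ y ∩ Icc 1 p, W p q ρ (y.erase e) y
          = AF p q ρ m (jcd p y) / (((icd p y + 1 : ℕ) : ℝ) * (NB p q ρ m (jcd p y) : ℝ)) := by
        intro e he
        obtain ⟨hey, heIcc⟩ := Finset.mem_inter.mp he
        have hicd := icd_erase_mem heIcc hey
        have hjcd := jcd_erase_mem (y := y) heIcc
        have hrk : hammingRank p ρ (y.erase e) = m := by
          rw [hammingRank_eq] at hyr ⊢
          omega
        rw [W, if_pos ⟨Finset.erase_subset _ _, by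
            rw [Finset.sdiff_erase_self hey, Finset.card_singleton]⟩,
          if_pos (by rw [Finset.sdiff_erase_self hey, Finset.singleton_subset_iff]; exact heIcc),
          wA, hrk, hjcd, hicd]
      rw [hset, Finset.sum_congr rfl hval, Finset.sum_const]
      have hcount : (y ∩ Icc 1 p).card = p - icd p y := by
        have e2 : (Icc 1 p ∩ y).card + (Icc 1 p \ y).card = p := by
          have := Finset.card_inter_add_card_sdiff (Icc 1 p) y
          simpa [Nat.card_Icc] using this
        rw [Finset.inter_comm]
        unfold icd
        omega
      rw [hcount, nsmul_eq_mul]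
      -- numeric identity
      have hNBm : 0 < NB p q ρ m (jcd p y) := NB_pos (by omega) (by omega) hjb
      have hNBmne : (NB p q ρ m (jcd p y) : ℝ) ≠ 0 := by exact_mod_cast hNBm.ne'
      have hkey : (p - icd p y) * NB p q ρ (m+1) (jcd p y)
          = (icd p y + 1) * NB p q ρ m (jcd p y) := by
        rw [NB_val (by omega) (by omega) hjb, NB_val (by omega) (by omega) hjb]
        rw [show min p ρ + jcd p y - (m+1) = icd p y by omega,
          show min p ρ + jcd p y - m = icd p y + 1 by omega]
        have := Nat.choose_succ_right_eq p (icd p y)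
        calc (p - icd p y) * (p.choose (icd p y) * q.choose (jcd p y))
            = (p.choose (icd p y) * (p - icd p y)) * q.choose (jcd p y) := by ring
          _ = (p.choose (icd p y + 1) * (icd p y + 1)) * q.choose (jcd p y) := by rw [← this]
          _ = (icd p y + 1) * (p.choose (icd p y + 1) * q.choose (jcd p y)) := by ring
      have hkeyR : ((p - icd p y : ℕ) : ℝ) * (NB p q ρ (m+1) (jcd p y) : ℝ)
          = ((icd p y + 1 : ℕ) : ℝ) * (NB p q ρ m (jcd p y) : ℝ) := by
        exact_mod_cast congrArg (fun n : ℕ => (n : ℝ)) hkey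
      have hNBmR : (0:ℝ) < ((icd p y + 1 : ℕ) : ℝ) * (NB p q ρ m (jcd p y) : ℝ) := by
        have : (0:ℝ) < (NB p q ρ m (jcd p y) : ℝ) := by exact_mod_cast hNBm
        positivity
      rw [eq_div_iff hNB'ne, mul_assoc, mul_comm (AF p q ρ m (jcd p y) / _),
        ← mul_assoc]
      rw [hkeyR, mul_comm, div_mul_eq_mul_div, mul_div_assoc, div_self hNBmR.ne', mul_one]
    · -- icd y = min p ρ : empty, AF = 0
      have hset : (y.filter (fun e => y.erase e ∈ Lev p q ρ m)).filter (fun e => e ≤ p) = ∅ := by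
        apply Finset.eq_empty_of_forall_notMem
        intro e he
        obtain ⟨hin, hep⟩ := Finset.mem_filter.mp he
        obtain ⟨hey, hmem⟩ := Finset.mem_filter.mp hin
        have h1 : 1 ≤ e := (Finset.mem_Icc.mp (hys hey)).1
        have heIcc : e ∈ Icc 1 p := Finset.mem_Icc.mpr ⟨h1, hep⟩
        have hicd := icd_erase_mem heIcc hey
        have h2 := (mem_Lev.mp hmem).2.1
        have h3 := icd_le_p p (y.erase e)
        omega
      have hAF : AF p q ρ m (jcd p y) = 0 := by
        have hj' : jcd p y = m + 1 := by omega
        rw [AF, SP_full (by omega) (by omega), SP_full (by omega) (by omega)]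
        ring
      rw [hset, hAF, Finset.sum_empty]
      simp
  have claimβ : ∑ e ∈ (y.filter (fun e => y.erase e ∈ Lev p q ρ m)).filter (fun e => ¬ e ≤ p),
      W p q ρ (y.erase e) y
      = (SP p q ρ m (jcd p y) - SP p q ρ (m+1) (jcd p y)) / (NB p q ρ (m+1) (jcd p y) : ℝ) := by
    have hsetβ : (y.filter (fun e => y.erase e ∈ Lev p q ρ m)).filter (fun e => ¬ e ≤ p)
        = y \ Icc 1 p := by
      ext e
      simp only [Finset.mem_filter, Finset.mem_sdiff, Finset.mem_Icc]
      constructor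
      · intro h
        obtain ⟨⟨hey, hmem⟩, hep⟩ := h
        exact ⟨hey, by omega⟩
      · intro h
        obtain ⟨hey, henp⟩ := h
        have h1 : 1 ≤ e := (Finset.mem_Icc.mp (hys hey)).1
        have heIcc : e ∉ Icc 1 p := by rw [Finset.mem_Icc]; omega
        have hicd := icd_erase_not (y := y) heIcc
        have hjcd := jcd_erase_not heIcc hey
        refine ⟨⟨hey, ?_⟩, by omega⟩
        refine mem_Lev.mpr ⟨(Finset.erase_subset _ _).trans hys, by omega, by omega, ?_⟩
        rw [hammingRank_eq] at hyr ⊢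
        omega
    rw [hsetβ]
    have hval : ∀ e ∈ y \ Icc 1 p, W p q ρ (y.erase e) y
        = BF p q ρ m (jcd p y - 1) /
          (((q - (jcd p y - 1) : ℕ) : ℝ) * (NB p q ρ m (jcd p y - 1) : ℝ)) := by
      intro e he
      obtain ⟨hey, heIcc⟩ := Finset.mem_sdiff.mp he
      have hicd := icd_erase_not (y := y) heIcc
      have hjcd := jcd_erase_not heIcc hey
      have hrk : hammingRank p ρ (y.erase e) = m := by
        rw [hammingRank_eq] at hyr ⊢
        omega
      have hjcd' : jcd p (y.erase e) = jcd p y - 1 := by omega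
      rw [W, if_pos ⟨Finset.erase_subset _ _, by
          rw [Finset.sdiff_erase_self hey, Finset.card_singleton]⟩,
        if_neg (by rw [Finset.sdiff_erase_self hey, Finset.singleton_subset_iff]; exact heIcc),
        wB, hrk, hjcd']
    rw [Finset.sum_congr rfl hval, Finset.sum_const]
    have hcount : (y \ Icc 1 p).card = jcd p y := rfl
    rw [hcount]
    rcases Nat.eq_zero_or_pos (jcd p y) with hj0 | hj1
    · rw [hj0]
      simp [SP]
    · have hj'1 : jcd p y - 1 + 1 = jcd p y := by omega
      have hBFd : BF p q ρ m (jcd p y - 1)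
          = SP p q ρ m (jcd p y) - SP p q ρ (m+1) (jcd p y) := by
        rw [BF, hj'1]
      have hNBm : 0 < NB p q ρ m (jcd p y - 1) :=
        NB_pos (by omega) (by omega) (by omega)
      have hNBmne : (NB p q ρ m (jcd p y - 1) : ℝ) ≠ 0 := by exact_mod_cast hNBm.ne'
      have hqj : 0 < q - (jcd p y - 1) := by omega
      have hkey2 : jcd p y * NB p q ρ (m+1) (jcd p y)
          = (q - (jcd p y - 1)) * NB p q ρ m (jcd p y - 1) := by
        rw [NB_val (by omega) (by omega) hjb, NB_val (by omega) (by omega) (by omega)]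
        rw [show min p ρ + (jcd p y - 1) - m = min p ρ + jcd p y - (m+1) by omega]
        have hch := Nat.choose_succ_right_eq q (jcd p y - 1)
        rw [hj'1] at hch
        calc jcd p y * (p.choose (min p ρ + jcd p y - (m+1)) * q.choose (jcd p y))
            = (q.choose (jcd p y) * jcd p y) * p.choose (min p ρ + jcd p y - (m+1)) := by ring
          _ = (q.choose (jcd p y - 1) * (q - (jcd p y - 1))) * p.choose (min p ρ + jcd p y - (m+1)) := by rw [hch]
          _ = (q - (jcd p y - 1)) * (p.choose (min p ρ + jcd p y - (m+1)) * q.choose (jcd p y - 1)) := by ring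
      have hkey2R : (jcd p y : ℝ) * (NB p q ρ (m+1) (jcd p y) : ℝ)
          = ((q - (jcd p y - 1) : ℕ) : ℝ) * (NB p q ρ m (jcd p y - 1) : ℝ) := by
        exact_mod_cast congrArg (fun n : ℕ => (n : ℝ)) hkey2
      have hDpos : (0:ℝ) < ((q - (jcd p y - 1) : ℕ) : ℝ) * (NB p q ρ m (jcd p y - 1) : ℝ) := by
        have h1 : (0:ℝ) < ((q - (jcd p y - 1) : ℕ) : ℝ) := by exact_mod_cast hqj
        have h2 : (0:ℝ) < (NB p q ρ m (jcd p y - 1) : ℝ) := by exact_mod_cast hNBm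
        positivity
      rw [hBFd, nsmul_eq_mul]
      rw [eq_div_iff hNB'ne, mul_assoc,
        mul_comm ((SP p q ρ m (jcd p y) - SP p q ρ (m+1) (jcd p y)) / _), ← mul_assoc]
      rw [hkey2R, mul_comm, div_mul_eq_mul_div, mul_div_assoc, div_self hDpos.ne', mul_one]
  rw [claimα, claimβ, ← add_div]
  have hfin : AF p q ρ m (jcd p y) + (SP p q ρ m (jcd p y) - SP p q ρ (m+1) (jcd p y))
      = (NB p q ρ (m+1) (jcd p y) : ℝ) / (ML p q ρ (m+1) : ℝ) := by
    rw [AF, ← SP_succ_sub]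
    ring
  rw [hfin, div_right_comm, div_self hNB'ne]

end LYMHB4

namespace LYMHB4
open LYMHB LYMHB2 LYMHB3

theorem nm {p q ρ m : ℕ} {F : Finset (Finset ℕ)} (hF : F ⊆ Lev p q ρ m)
    (hm : m < min p ρ + min q ρ) :
    (F.card : ℝ) / (ML p q ρ m : ℝ) ≤
    (((Lev p q ρ (m+1)).filter (fun y => ∃ x ∈ F, x ⊆ y)).card : ℝ) / (ML p q ρ (m+1) : ℝ) := by
  have h1 : ∑ x ∈ F, ∑ y ∈ Lev p q ρ (m+1), W p q ρ x y = (F.card : ℝ) / (ML p q ρ m : ℝ) := by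
    rw [Finset.sum_congr rfl (fun x hx => sum_W_out (hF hx) hm), Finset.sum_const,
      nsmul_eq_mul, mul_one_div]
  rw [← h1, Finset.sum_comm]
  have h2 : ∑ y ∈ Lev p q ρ (m+1), ∑ x ∈ F, W p q ρ x y
      = ∑ y ∈ (Lev p q ρ (m+1)).filter (fun y => ∃ x ∈ F, x ⊆ y), ∑ x ∈ F, W p q ρ x y := by
    rw [Finset.sum_filter_of_ne]
    intro y hy hne
    obtain ⟨x, hx, hWne⟩ := Finset.exists_ne_zero_of_sum_ne_zero hne
    exact ⟨x, hx, by by_contra hc; exact hWne (by rw [W, if_neg (fun h => hc h.1)])⟩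
  rw [h2]
  calc ∑ y ∈ (Lev p q ρ (m+1)).filter (fun y => ∃ x ∈ F, x ⊆ y), ∑ x ∈ F, W p q ρ x y
      ≤ ∑ y ∈ (Lev p q ρ (m+1)).filter (fun y => ∃ x ∈ F, x ⊆ y), 1 / (ML p q ρ (m+1) : ℝ) := by
        apply Finset.sum_le_sum
        intro y hy
        have hyL : y ∈ Lev p q ρ (m+1) := (Finset.mem_filter.mp hy).1
        calc ∑ x ∈ F, W p q ρ x y
            ≤ ∑ x ∈ Lev p q ρ m, W p q ρ x y :=
              Finset.sum_le_sum_of_subset_of_nonneg hF (fun x hx _ => W_nonneg hx hm y)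
          _ = 1 / (ML p q ρ (m+1) : ℝ) := sum_W_in hyL
    _ = (((Lev p q ρ (m+1)).filter (fun y => ∃ x ∈ F, x ⊆ y)).card : ℝ) / (ML p q ρ (m+1) : ℝ) := by
        rw [Finset.sum_const, nsmul_eq_mul, mul_one_div]

theorem pushup {p q ρ : ℕ} {A : Finset (Finset ℕ)}
    (hanti : IsAntichain (· ⊆ ·) (A : Set (Finset ℕ))) :
    ∀ m, m ≤ min p ρ + min q ρ →
    ∑ k ∈ range (m+1), ((A ∩ Lev p q ρ k).card : ℝ) / (ML p q ρ k : ℝ)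
      ≤ (((Lev p q ρ m).filter (fun y => ∃ s ∈ A, s ⊆ y)).card : ℝ) / (ML p q ρ m : ℝ) := by
  intro m
  induction m with
  | zero =>
    intro hm
    rw [Finset.sum_range_one]
    have hsub : A ∩ Lev p q ρ 0 ⊆ (Lev p q ρ 0).filter (fun y => ∃ s ∈ A, s ⊆ y) := by
      intro S hS
      obtain ⟨h1, h2⟩ := Finset.mem_inter.mp hS
      exact Finset.mem_filter.mpr ⟨h2, S, h1, Finset.Subset.refl S⟩
    have hMpos : (0:ℝ) < (ML p q ρ 0 : ℝ) := by exact_mod_cast ML_pos (Nat.zero_le _)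
    exact (div_le_div_iff_of_pos_right hMpos).mpr (by exact_mod_cast Finset.card_le_card hsub)
  | succ m IH =>
    intro hm1
    have hm : m < min p ρ + min q ρ := by omega
    have hIH := IH (by omega)
    have hNM := nm (Finset.filter_subset (fun y => ∃ s ∈ A, s ⊆ y) (Lev p q ρ m)) hm
    have hsub : A ∩ Lev p q ρ (m+1) ∪ (Lev p q ρ (m+1)).filter
        (fun y => ∃ x ∈ (Lev p q ρ m).filter (fun z => ∃ s ∈ A, s ⊆ z), x ⊆ y)
        ⊆ (Lev p q ρ (m+1)).filter (fun y => ∃ s ∈ A, s ⊆ y) := by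
      intro y hy
      rcases Finset.mem_union.mp hy with h | h
      · obtain ⟨h1, h2⟩ := Finset.mem_inter.mp h
        exact Finset.mem_filter.mpr ⟨h2, y, h1, Finset.Subset.refl y⟩
      · obtain ⟨h1, x, hx, hxy⟩ := Finset.mem_filter.mp h
        obtain ⟨hxL, s, hs, hsx⟩ := Finset.mem_filter.mp hx
        exact Finset.mem_filter.mpr ⟨h1, s, hs, hsx.trans hxy⟩
    have hdisj : Disjoint (A ∩ Lev p q ρ (m+1)) ((Lev p q ρ (m+1)).filter
        (fun y => ∃ x ∈ (Lev p q ρ m).filter (fun z => ∃ s ∈ A, s ⊆ z), x ⊆ y)) := by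
      rw [Finset.disjoint_left]
      intro y hy1 hy2
      obtain ⟨hyA, hyL⟩ := Finset.mem_inter.mp hy1
      obtain ⟨_, x, hx, hxy⟩ := Finset.mem_filter.mp hy2
      obtain ⟨hxL, s, hs, hsx⟩ := Finset.mem_filter.mp hx
      have hcx := (card_mem_Lev hxL).2
      have hcy := (card_mem_Lev hyL).2
      have hcs : s.card ≤ x.card := Finset.card_le_card hsx
      have hsne : s ≠ y := fun hc => by
        rw [hc] at hcs; omega
      exact hanti hs hyA hsne (hsx.trans hxy)
    have hMpos : (0:ℝ) < (ML p q ρ (m+1) : ℝ) := by exact_mod_cast ML_pos (by omega)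
    rw [Finset.sum_range_succ]
    calc ∑ k ∈ range (m+1), ((A ∩ Lev p q ρ k).card : ℝ) / (ML p q ρ k : ℝ)
          + ((A ∩ Lev p q ρ (m+1)).card : ℝ) / (ML p q ρ (m+1) : ℝ)
        ≤ (((Lev p q ρ m).filter (fun y => ∃ s ∈ A, s ⊆ y)).card : ℝ) / (ML p q ρ m : ℝ)
          + ((A ∩ Lev p q ρ (m+1)).card : ℝ) / (ML p q ρ (m+1) : ℝ) := by
          exact add_le_add hIH le_rfl
      _ ≤ (((Lev p q ρ (m+1)).filter (fun y => ∃ x ∈ (Lev p q ρ m).filter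
            (fun z => ∃ s ∈ A, s ⊆ z), x ⊆ y)).card : ℝ) / (ML p q ρ (m+1) : ℝ)
          + ((A ∩ Lev p q ρ (m+1)).card : ℝ) / (ML p q ρ (m+1) : ℝ) := by
          exact add_le_add hNM le_rfl
      _ = (((A ∩ Lev p q ρ (m+1)) ∪ (Lev p q ρ (m+1)).filter (fun y => ∃ x ∈
            (Lev p q ρ m).filter (fun z => ∃ s ∈ A, s ⊆ z), x ⊆ y)).card : ℝ)
            / (ML p q ρ (m+1) : ℝ) := by
          rw [Finset.card_union_of_disjoint hdisj]
          push_cast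
          ring
      _ ≤ (((Lev p q ρ (m+1)).filter (fun y => ∃ s ∈ A, s ⊆ y)).card : ℝ)
            / (ML p q ρ (m+1) : ℝ) := by
          exact (div_le_div_iff_of_pos_right hMpos).mpr (by exact_mod_cast Finset.card_le_card hsub)

end LYMHB4


section
open LYMHB LYMHB2 LYMHB3 LYMHB4

/-- The smallest convex subposet of `(2^{[p+q]}, ⊆)` containing the Hamming ball
`B_ρ[p,q]` is a LYM poset: every antichain `A` (with respect to inclusion) of subsets
`S ⊆ {1,…,p+q}` with `|{1,…,p} \ S| ≤ ρ` and `|S \ {1,…,p}| ≤ ρ` satisfies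
`∑_{S ∈ A} 1 / M_{r(S)} ≤ 1`. -/
theorem convexHull_hammingBall_isLYM (p q ρ : ℕ) (A : Finset (Finset ℕ))
    (hA : ∀ S ∈ A, memConvexHull p q ρ S)
    (hanti : IsAntichain (· ⊆ ·) (A : Set (Finset ℕ))) :
    ∑ S ∈ A, (1 : ℝ) / convexHullLayerSize p q ρ (hammingRank p ρ S) ≤ 1 := by
  classical
  have hmemL : ∀ S ∈ A, S ∈ Lev p q ρ (hammingRank p ρ S) := by
    intro S hS
    obtain ⟨h1, h2, h3⟩ := hA S hS
    exact mem_Lev.mpr ⟨h1, h2, h3, rfl⟩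
  have hrkle : ∀ S ∈ A, hammingRank p ρ S ≤ min p ρ + min q ρ := by
    intro S hS
    have h4 := jcd_le_minq (hmemL S hS)
    rw [hammingRank_eq]
    omega
  have hsum : ∑ S ∈ A, (1:ℝ) / (convexHullLayerSize p q ρ (hammingRank p ρ S) : ℝ)
      = ∑ S ∈ A, (1:ℝ) / (ML p q ρ (hammingRank p ρ S) : ℝ) :=
    Finset.sum_congr rfl (fun S _ => by rw [ML_eq])
  rw [hsum]
  have hfib : ∑ S ∈ A, (1:ℝ) / (ML p q ρ (hammingRank p ρ S) : ℝ)
      = ∑ k ∈ range (min p ρ + min q ρ + 1),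
          ∑ S ∈ A.filter (fun S => hammingRank p ρ S = k),
            (1:ℝ) / (ML p q ρ (hammingRank p ρ S) : ℝ) :=
    (Finset.sum_fiberwise_of_maps_to
      (fun S hS => Finset.mem_range.mpr (by have := hrkle S hS; omega)) _).symm
  rw [hfib]
  have hinner : ∀ k ∈ range (min p ρ + min q ρ + 1),
      ∑ S ∈ A.filter (fun S => hammingRank p ρ S = k),
        (1:ℝ) / (ML p q ρ (hammingRank p ρ S) : ℝ)
      = ((A ∩ Lev p q ρ k).card : ℝ) / (ML p q ρ k : ℝ) := by
    intro k hk
    have hfe : A.filter (fun S => hammingRank p ρ S = k) = A ∩ Lev p q ρ k := by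
      ext S
      simp only [Finset.mem_filter, Finset.mem_inter]
      constructor
      · rintro ⟨hSA, hrk⟩
        exact ⟨hSA, hrk ▸ hmemL S hSA⟩
      · rintro ⟨hSA, hSL⟩
        exact ⟨hSA, (mem_Lev.mp hSL).2.2.2⟩
    rw [Finset.sum_congr rfl (fun S hS => by
        rw [(Finset.mem_filter.mp hS).2]), hfe, Finset.sum_const, nsmul_eq_mul, mul_one_div]
  rw [Finset.sum_congr rfl hinner]
  have htop := pushup hanti (min p ρ + min q ρ) le_rfl
  apply le_trans htop
  -- the top level has at most ML elements
  have hML : ML p q ρ (min p ρ + min q ρ) = q.choose (min q ρ) := by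
    rw [ML, Finset.sum_eq_single_of_mem (min q ρ) (Finset.mem_range.mpr (by omega))]
    · rw [NB_val (by omega) (by omega) le_rfl,
        show min p ρ + min q ρ - (min p ρ + min q ρ) = 0 by omega,
        Nat.choose_zero_right, one_mul]
    · intro j hj hne
      have := Finset.mem_range.mp hj
      exact NB_eq_zero (by omega)
  have hcard : (Lev p q ρ (min p ρ + min q ρ)).card
      ≤ (Finset.powersetCard (min q ρ) (Icc (p+1) (p+q))).card := by
    apply Finset.card_le_card_of_injOn (fun S => S \ Icc 1 p)
    · intro S hS
      obtain ⟨hra, hia⟩ := rank_arith hS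
      have hjb := jcd_le_minq hS
      have hij : jcd p S = min q ρ ∧ icd p S = 0 := by omega
      refine Finset.mem_powersetCard.mpr ⟨?_, hij.1⟩
      intro e he
      obtain ⟨he1, he2⟩ := Finset.mem_sdiff.mp he
      have h3 := (mem_Lev.mp hS).1 he1
      rw [Finset.mem_Icc] at h3 ⊢
      rw [Finset.mem_Icc] at he2
      omega
    · intro S1 hS1 S2 hS2 h
      have hfull : ∀ S, S ∈ Lev p q ρ (min p ρ + min q ρ) → S = Icc 1 p ∪ (S \ Icc 1 p) := by
        intro S hS
        obtain ⟨hra, hia⟩ := rank_arith hS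
        have hjb := jcd_le_minq hS
        have hic : icd p S = 0 := by omega
        have hsub : Icc 1 p ⊆ S := by
          rw [← Finset.sdiff_eq_empty_iff_subset]
          exact Finset.card_eq_zero.mp hic
        ext a
        constructor
        · intro ha
          by_cases hIcc : a ∈ Icc 1 p
          · exact Finset.mem_union_left _ hIcc
          · exact Finset.mem_union_right _ (Finset.mem_sdiff.mpr ⟨ha, hIcc⟩)
        · intro ha
          rcases Finset.mem_union.mp ha with h' | h'
          · exact hsub h'
          · exact (Finset.mem_sdiff.mp h').1
      rw [hfull S1 (by simpa using hS1), hfull S2 (by simpa using hS2)]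
      simp only at h
      rw [h]
  rw [Finset.card_powersetCard, Nat.card_Icc, show p + q + 1 - (p+1) = q by omega] at hcard
  have hMpos : (0:ℝ) < (ML p q ρ (min p ρ + min q ρ) : ℝ) := by
    exact_mod_cast ML_pos le_rfl
  rw [div_le_one hMpos]
  have h5 : ((Lev p q ρ (min p ρ + min q ρ)).filter
      (fun y => ∃ s ∈ A, s ⊆ y)).card ≤ ML p q ρ (min p ρ + min q ρ) := by
    calc _ ≤ (Lev p q ρ (min p ρ + min q ρ)).card := Finset.card_le_card (Finset.filter_subset _ _)
      _ ≤ q.choose (min q ρ) := hcard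
      _ = ML p q ρ (min p ρ + min q ρ) := hML.symm
  exact_mod_cast h5

end
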